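/- Let ρ be a density matrix on ℂ^d⊗ℂ^d with reduced states ρ_a, ρ_b and cross-covariance block X_ρ in the canonical operator bases, and let r ≥ 1. If ρ violates the purity criterion, i.e. tr(ρ_a²) + tr(ρ_b²) + 2 tr|X_ρ| > 2r, then it also violates the stronger criterion: tr|X_ρ| > r − 1 and (tr|X_ρ| − (r−1))² > (1 − tr(ρ_a²)) (1 − tr(ρ_b²)). (Hence the criterion of the previous statement is weaker than the criterion involving the product of purity deficits.) -/

import Mathlib

open Matrix Kronecker BigOperators Finset
open scoped ComplexOrder

/-- Expectation value ⟨A⟩_ρ = Re tr(ρ A). -/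
noncomputable def expval {n : Type*} [Fintype n] (ρ A : Matrix n n ℂ) : ℝ :=
  ((ρ * A).trace).re

/-- A density matrix: positive semidefinite with unit trace. -/
def IsDensityMatrix {n : Type*} [Fintype n] (ρ : Matrix n n ℂ) : Prop :=
  ρ.PosSemidef ∧ ρ.trace = 1

/-- The projector |v⟩⟨v| associated to a vector. -/
noncomputable def pureState {n : Type*} (v : n → ℂ) : Matrix n n ℂ :=
  Matrix.vecMulVec v (star v)

/-- A normalized vector. -/
def IsUnitVec {n : Type*} [Fintype n] (v : n → ℂ) : Prop :=
  ∑ i, Complex.normSq (v i) = 1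

/-- The canonical Hermitian operator basis of ℂ^d, indexed by pairs (j,k):
diagonal operators for j = k, real operators for j < k, imaginary operators for j > k. -/
noncomputable def canonG (d : ℕ) : Fin d × Fin d → Matrix (Fin d) (Fin d) ℂ := fun μ =>
  if μ.1 = μ.2 then Matrix.single μ.1 μ.1 1
  else if μ.1 < μ.2 then
    ((Real.sqrt 2 : ℂ))⁻¹ • (Matrix.single μ.1 μ.2 1 + Matrix.single μ.2 μ.1 1)
  else
    (Complex.I * ((Real.sqrt 2 : ℂ))⁻¹) •
      (Matrix.single μ.2 μ.1 1 - Matrix.single μ.1 μ.2 1)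

/-- Covariance matrix of a family of observables w.r.t. a state ρ. -/
noncomputable def covMat {n K : Type*} [Fintype n] (ρ : Matrix n n ℂ)
    (M : K → Matrix n n ℂ) : Matrix K K ℝ :=
  Matrix.of fun j k =>
    (1/2 : ℝ) * expval ρ (M j * M k + M k * M j) - expval ρ (M j) * expval ρ (M k)

/-- The local observables (g_μ ⊗ 1, 1 ⊗ g_ν) on the bipartite space. -/
noncomputable def bipObs (d : ℕ) :
    (Fin d × Fin d) ⊕ (Fin d × Fin d) → Matrix (Fin d × Fin d) (Fin d × Fin d) ℂ :=
  Sum.elim (fun μ => canonG d μ ⊗ₖ (1 : Matrix (Fin d) (Fin d) ℂ))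
           (fun ν => (1 : Matrix (Fin d) (Fin d) ℂ) ⊗ₖ canonG d ν)

/-- The full covariance matrix Γ_ρ of the canonical bipartite observables. -/
noncomputable def GammaCM (d : ℕ) (ρ : Matrix (Fin d × Fin d) (Fin d × Fin d) ℂ) :
    Matrix ((Fin d × Fin d) ⊕ (Fin d × Fin d)) ((Fin d × Fin d) ⊕ (Fin d × Fin d)) ℝ :=
  covMat ρ (bipObs d)

/-- The cross-covariance block X_ρ. -/
noncomputable def crossCov (d : ℕ) (ρ : Matrix (Fin d × Fin d) (Fin d × Fin d) ℂ) :
    Matrix (Fin d × Fin d) (Fin d × Fin d) ℝ :=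
  Matrix.of fun μ ν =>
    expval ρ (canonG d μ ⊗ₖ canonG d ν)
      - expval ρ (canonG d μ ⊗ₖ 1) * expval ρ ((1 : Matrix (Fin d) (Fin d) ℂ) ⊗ₖ canonG d ν)

/-- Reduced state on the first subsystem. -/
noncomputable def redA (d : ℕ) (ρ : Matrix (Fin d × Fin d) (Fin d × Fin d) ℂ) :
    Matrix (Fin d) (Fin d) ℂ :=
  Matrix.of fun i j => ∑ k, ρ (i, k) (j, k)

/-- Reduced state on the second subsystem. -/
noncomputable def redB (d : ℕ) (ρ : Matrix (Fin d × Fin d) (Fin d × Fin d) ℂ) :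
    Matrix (Fin d) (Fin d) ℂ :=
  Matrix.of fun i j => ∑ k, ρ (k, i) (k, j)

/-- Purity tr(σ²) (real part). -/
noncomputable def purity {n : Type*} [Fintype n] (σ : Matrix n n ℂ) : ℝ :=
  ((σ * σ).trace).re

/-- The positive semidefinite square root of a positive semidefinite matrix
(the definition of `Matrix.PosSemidef.sqrt` in the older Mathlib). -/
noncomputable def PosSemidef.sqrtOld {n 𝕜 : Type*} [Fintype n] [DecidableEq n] [RCLike 𝕜]
    {A : Matrix n n 𝕜} (hA : A.PosSemidef) : Matrix n n 𝕜 :=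
  hA.1.eigenvectorUnitary.1 * diagonal ((↑) ∘ (√·) ∘ hA.1.eigenvalues) *
  (star hA.1.eigenvectorUnitary : Matrix n n 𝕜)

/-- Trace norm of a real matrix: sum of its singular values, i.e. tr √(XᵀX). -/
noncomputable def traceNorm {n : Type*} [Fintype n] [DecidableEq n] (X : Matrix n n ℝ) : ℝ :=
  (PosSemidef.sqrtOld (Matrix.posSemidef_conjTranspose_mul_self X)).trace

/-- Schmidt rank of a pure state vector is the rank of its coefficient matrix. -/
def SchmidtRankLE (d r : ℕ) (v : Fin d × Fin d → ℂ) : Prop :=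
  (Matrix.of fun j k : Fin d => v (j, k)).rank ≤ r

/-- Schmidt number at most r. -/
def SchmidtNumberLE (d r : ℕ) (ρ : Matrix (Fin d × Fin d) (Fin d × Fin d) ℂ) : Prop :=
  ∃ (n : ℕ) (p : Fin n → ℝ) (ψ : Fin n → (Fin d × Fin d → ℂ)),
    (∀ k, 0 ≤ p k) ∧ (∑ k, p k = 1) ∧ (∀ k, IsUnitVec (ψ k)) ∧
    (∀ k, SchmidtRankLE d r (ψ k)) ∧
    ρ = ∑ k, (p k : ℂ) • pureState (ψ k)


lemma entry_sq_le {n : Type*} [Fintype n] [DecidableEq n] {σ : Matrix n n ℂ}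
    (hherm : σ.IsHermitian) (hpos : ∀ x : n → ℂ, 0 ≤ (star x ⬝ᵥ σ.mulVec x).re)
    (i j : n) : Complex.normSq (σ i j) ≤ (σ i i).re * (σ j j).re := by
  have hdiag : ∀ k, 0 ≤ (σ k k).re := by
    intro k
    have := hpos (Pi.single k 1)
    simpa [← Pi.single_star, mulVec_single, single_dotProduct] using this
  by_cases hij : i = j
  · subst hij
    have him : (σ i i).im = 0 := by
      have h2 := congrArg Complex.im (hherm.apply i i)
      simp at h2
      linarith
    have hreal : σ i i = Complex.ofReal ((σ i i).re) := by
      apply Complex.ext <;> simp [him]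
    rw [hreal]
    simp [Complex.normSq_ofReal, sq]
  · set c := σ i j with hc
    set a := (σ i i).re
    set b := (σ j j).re
    set N := Complex.normSq c with hN
    have hji : σ j i = starRingEnd ℂ c := by
      have := hherm.apply j i
      simpa [hc] using this.symm
    have key : ∀ t : ℝ, 0 ≤ a * (t * t) + (2 * N) * t + N * b := by
      intro t
      set x : n → ℂ := (t : ℂ) • (Pi.single i 1 : n → ℂ) + (Pi.single j (starRingEnd ℂ c) : n → ℂ) with hx
      have h := hpos x
      have hexp : (star x ⬝ᵥ σ.mulVec x) =
          (t : ℂ) * (t : ℂ) * σ i i + (t : ℂ) * ((starRingEnd ℂ c) * c)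
            + (t : ℂ) * (c * starRingEnd ℂ c) + (starRingEnd ℂ c) * c * σ j j := by
        rw [hx]
        simp only [star_add, star_smul, ← Pi.single_star, star_one, mulVec_add, mulVec_smul,
          mulVec_single, dotProduct_add, add_dotProduct, smul_dotProduct, dotProduct_smul,
          single_dotProduct, Pi.smul_apply, Pi.add_apply, star_star]
        simp [Complex.star_def, hji]
        ring
      rw [hexp] at h
      have h1 : (starRingEnd ℂ c) * c = (N : ℂ) := by rw [mul_comm]; exact Complex.mul_conj c
      have h2 : c * starRingEnd ℂ c = (N : ℂ) := Complex.mul_conj c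
      rw [h1, h2] at h
      have hre : ((t : ℂ) * (t : ℂ) * σ i i + (t : ℂ) * (N:ℂ)
            + (t : ℂ) * (N:ℂ) + (N:ℂ) * σ j j).re = a * (t * t) + (2*N) * t + N * b := by
        simp [Complex.add_re, Complex.mul_re]
        ring
      rw [hre] at h
      exact h
    rcases eq_or_lt_of_le (Complex.normSq_nonneg c) with hN0 | hN0
    · have := mul_nonneg (hdiag i) (hdiag j)
      rw [hN, ← hN0]
      exact this
    · have hd := discrim_le_zero key
      rw [discrim] at hd
      nlinarith [hdiag i, hdiag j]

lemma purity_le_one' {n : Type*} [Fintype n] [DecidableEq n] {σ : Matrix n n ℂ}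
    (hherm : σ.IsHermitian) (hpos : ∀ x : n → ℂ, 0 ≤ (star x ⬝ᵥ σ.mulVec x).re)
    (ht : σ.trace = 1) :
    ((σ * σ).trace).re ≤ 1 := by
  have hdre : ∑ i, (σ i i).re = 1 := by
    have := congrArg Complex.re ht
    simpa [Matrix.trace, Matrix.diag, Complex.re_sum] using this
  have hexp : ((σ * σ).trace).re = ∑ i, ∑ j, Complex.normSq (σ i j) := by
    rw [Matrix.trace]
    simp only [Matrix.diag, Matrix.mul_apply, Complex.re_sum]
    congr 1; ext i; congr 1; ext j
    have h3 : σ j i = starRingEnd ℂ (σ i j) := by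
      have := hherm.apply j i; simpa using this.symm
    rw [h3, Complex.mul_conj]
    simp
  rw [hexp]
  calc ∑ i, ∑ j, Complex.normSq (σ i j)
      ≤ ∑ i, ∑ j, (σ i i).re * (σ j j).re := by
        apply Finset.sum_le_sum; intro i _
        apply Finset.sum_le_sum; intro j _
        exact entry_sq_le hherm hpos i j
    _ = (∑ i, (σ i i).re) * (∑ j, (σ j j).re) := by rw [Finset.sum_mul_sum]
    _ = 1 := by rw [hdre]; ring

lemma sum_rot {α : Type*} [Fintype α] (f : α → α → α → ℂ) :
    ∑ i, ∑ j, ∑ k, f i j k = ∑ k, ∑ i, ∑ j, f i j k :=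
  (Finset.sum_congr rfl fun _ _ => Finset.sum_comm).trans Finset.sum_comm

lemma redA_herm (d : ℕ) (ρ : Matrix (Fin d × Fin d) (Fin d × Fin d) ℂ)
    (h : ρ.IsHermitian) : (redA d ρ).IsHermitian := by
  ext i j
  simp only [Matrix.conjTranspose_apply, redA, Matrix.of_apply, star_sum]
  exact Finset.sum_congr rfl fun k _ => h.apply (i, k) (j, k)

lemma redA_quad (d : ℕ) (ρ : Matrix (Fin d × Fin d) (Fin d × Fin d) ℂ)
    (h : ρ.PosSemidef) (x : Fin d → ℂ) :
    0 ≤ (star x ⬝ᵥ (redA d ρ).mulVec x).re := by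
  set y : Fin d → (Fin d × Fin d → ℂ) := fun k p => if p.2 = k then x p.1 else 0 with hy
  have rhs : ∀ k, star (y k) ⬝ᵥ ρ.mulVec (y k)
      = ∑ i, ∑ j, star (x i) * ρ (i,k) (j,k) * x j := by
    intro k
    simp only [dotProduct, mulVec, hy, Fintype.sum_prod_type, Pi.star_apply, apply_ite,
      star_zero, mul_ite, ite_mul, mul_zero, zero_mul, Finset.sum_ite_eq', Finset.mem_univ,
      if_true, Finset.mul_sum]
    apply Finset.sum_congr rfl; intro i _
    rw [Finset.sum_comm]
    simp only [Finset.sum_ite_eq', Finset.mem_univ, if_true]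
    apply Finset.sum_congr rfl; intro j _
    ring
  have e1 : star x ⬝ᵥ (redA d ρ).mulVec x
      = ∑ i, ∑ j, ∑ k, star (x i) * ρ (i,k) (j,k) * x j := by
    simp only [dotProduct, mulVec, redA, Matrix.of_apply, Pi.star_apply, Finset.sum_mul,
      Finset.mul_sum]
    apply Finset.sum_congr rfl; intro i _
    apply Finset.sum_congr rfl; intro j _
    apply Finset.sum_congr rfl; intro k _
    ring
  rw [e1, sum_rot]
  have e2 : ∑ k, ∑ i, ∑ j, star (x i) * ρ (i,k) (j,k) * x j
      = ∑ k, star (y k) ⬝ᵥ ρ.mulVec (y k) :=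
    Finset.sum_congr rfl fun k _ => (rhs k).symm
  rw [e2, Complex.re_sum]
  exact Finset.sum_nonneg fun k _ => (Complex.le_def.mp (h.dotProduct_mulVec_nonneg (y k))).1

lemma redA_trace (d : ℕ) (ρ : Matrix (Fin d × Fin d) (Fin d × Fin d) ℂ)
    (h : ρ.trace = 1) : (redA d ρ).trace = 1 := by
  rw [← h]
  simp [Matrix.trace, Matrix.diag, redA, Fintype.sum_prod_type]

lemma purity_redA_le_one (d : ℕ) (ρ : Matrix (Fin d × Fin d) (Fin d × Fin d) ℂ)
    (hρ : IsDensityMatrix ρ) : purity (redA d ρ) ≤ 1 :=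
  purity_le_one' (redA_herm d ρ hρ.1.1) (redA_quad d ρ hρ.1) (redA_trace d ρ hρ.2)

lemma redB_eq_redA (d : ℕ) (ρ : Matrix (Fin d × Fin d) (Fin d × Fin d) ℂ) :
    redB d ρ = redA d (ρ.submatrix (Equiv.prodComm (Fin d) (Fin d))
      (Equiv.prodComm (Fin d) (Fin d))) := by
  ext i j
  simp [redA, redB, Matrix.submatrix_apply]

lemma purity_redB_le_one (d : ℕ) (ρ : Matrix (Fin d × Fin d) (Fin d × Fin d) ℂ)
    (hρ : IsDensityMatrix ρ) : purity (redB d ρ) ≤ 1 := by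
  rw [redB_eq_redA]
  set e := Equiv.prodComm (Fin d) (Fin d)
  have hpsd : (ρ.submatrix e e).PosSemidef :=
    (Matrix.posSemidef_submatrix_equiv e).mpr hρ.1
  have htr : (ρ.submatrix e e).trace = 1 := by
    rw [← hρ.2]
    simp only [Matrix.trace, Matrix.diag, Matrix.submatrix_apply]
    exact Fintype.sum_equiv e _ _ fun p => rfl
  exact purity_le_one' (redA_herm d _ hpsd.1) (redA_quad d _ hpsd) (redA_trace d _ htr)

/-- Violating the purity criterion implies violating the product criterion,
i.e. the purity criterion is weaker. -/
theorem purity_criterion_weaker_than_product_criterion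
    (d r : ℕ) (hr : 1 ≤ r) (ρ : Matrix (Fin d × Fin d) (Fin d × Fin d) ℂ)
    (hρ : IsDensityMatrix ρ)
    (hviol : 2 * (r : ℝ) <
      purity (redA d ρ) + purity (redB d ρ) + 2 * traceNorm (crossCov d ρ)) :
    (r : ℝ) - 1 < traceNorm (crossCov d ρ) ∧
    (1 - purity (redA d ρ)) * (1 - purity (redB d ρ)) <
      (traceNorm (crossCov d ρ) - ((r : ℝ) - 1)) ^ 2 := by
  have ha := purity_redA_le_one d ρ hρ
  have hb := purity_redB_le_one d ρ hρ
  constructor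
  · linarith
  · nlinarith [sq_nonneg ((1 - purity (redA d ρ)) - (1 - purity (redB d ρ)))]
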